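/- If G_0, G_1, G_2 are cubic bridgeless graphs each admitting a Berge-Fulkerson cover, then any graph G obtained from G_0, G_1, G_2 by the windmill construction admits a Berge-Fulkerson cover. -/

import Mathlib

open SimpleGraph

/-- A graph is cubic (3-regular) if every vertex has exactly 3 neighbours. -/
def IsCubic {V : Type*} (G : SimpleGraph V) : Prop :=
  ∀ v : V, (G.neighborSet v).ncard = 3

/-- A graph is bridgeless if it has no cut-edge. -/
def IsBridgeless {V : Type*} (G : SimpleGraph V) : Prop :=
  ∀ e : Sym2 V, ¬ G.IsBridge e

/-- The edge set of `G` can be covered by `k` perfect matchings. -/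
def CoverByPM {V : Type*} (G : SimpleGraph V) (k : ℕ) : Prop :=
  ∃ M : Fin k → G.Subgraph,
    (∀ i, (M i).IsPerfectMatching) ∧ (⋃ i, (M i).edgeSet) = G.edgeSet

/-- The excessive index of `G`: the least number of perfect matchings needed to
cover the edge set of `G` (`⊤` if there is no such cover). -/
noncomputable def excessiveIndex {V : Type*} (G : SimpleGraph V) : ℕ∞ :=
  sInf {k : ℕ∞ | ∃ n : ℕ, k = n ∧ CoverByPM G n}

/-- `G` has a proper edge colouring with `n` colours. -/
def ProperEdgeColorable {V : Type*} (G : SimpleGraph V) (n : ℕ) : Prop :=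
  ∃ c : Sym2 V → Fin n, ∀ e ∈ G.edgeSet, ∀ f ∈ G.edgeSet,
    e ≠ f → (∃ v : V, v ∈ e ∧ v ∈ f) → c e ≠ c f

/-- The set of edges of `G` with one end-vertex in `A` and the other in `B`. -/
def edgesBetween {V : Type*} (G : SimpleGraph V) (A B : Set V) : Set (Sym2 V) :=
  {e | ∃ a b, G.Adj a b ∧ a ∈ A ∧ b ∈ B ∧ e = s(a, b)}

/-- The set of edges of `G` with exactly one end-vertex in `A`. -/
def edgeBoundary {V : Type*} (G : SimpleGraph V) (A : Set V) : Set (Sym2 V) :=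
  edgesBetween G A Aᶜ

/-- The subgraph induced on `A` contains a cycle. -/
def HasCycleOn {V : Type*} (G : SimpleGraph V) (A : Set V) : Prop :=
  ¬ (G.induce A).IsAcyclic

/-- `G` is cyclically `k`-edge-connected: there is no edge-cut with fewer than `k`
edges separating two parts each containing a cycle. -/
def CyclicallyEdgeConnected {V : Type*} (G : SimpleGraph V) (k : ℕ) : Prop :=
  ∀ A : Set V, HasCycleOn G A → HasCycleOn G Aᶜ → k ≤ (edgeBoundary G A).ncard

/-- A snark: a cubic, cyclically 4-edge-connected graph of girth at least five
that is not 3-edge-colourable. -/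
def IsSnark {V : Type*} (G : SimpleGraph V) : Prop :=
  IsCubic G ∧ CyclicallyEdgeConnected G 4 ∧ 5 ≤ G.girth ∧ ¬ ProperEdgeColorable G 3

/-- The data for the windmill construction: three graphs `G i`, each with a
distinguished edge `x i — y i`, where `x0 i, x1 i` are the two neighbours of
`x i` other than `y i`, and `y0 i, y1 i` the two neighbours of `y i` other
than `x i`. -/
structure WindmillData where
  V : Fin 3 → Type
  G : ∀ i, SimpleGraph (V i)
  x : ∀ i, V i
  y : ∀ i, V i
  x0 : ∀ i, V i
  x1 : ∀ i, V i
  y0 : ∀ i, V i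
  y1 : ∀ i, V i
  adj_xy : ∀ i, (G i).Adj (x i) (y i)
  adj_xx0 : ∀ i, (G i).Adj (x i) (x0 i)
  adj_xx1 : ∀ i, (G i).Adj (x i) (x1 i)
  adj_yy0 : ∀ i, (G i).Adj (y i) (y0 i)
  adj_yy1 : ∀ i, (G i).Adj (y i) (y1 i)
  x0_ne_x1 : ∀ i, x0 i ≠ x1 i
  y0_ne_y1 : ∀ i, y0 i ≠ y1 i
  x0_ne_y : ∀ i, x0 i ≠ y i
  x1_ne_y : ∀ i, x1 i ≠ y i
  y0_ne_x : ∀ i, y0 i ≠ x i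
  y1_ne_x : ∀ i, y1 i ≠ x i

namespace WindmillData

variable (D : WindmillData)

/-- The vertices of `H i = G i − {x i, y i}`. -/
def HVert (i : Fin 3) : Type := {v : D.V i // v ≠ D.x i ∧ v ≠ D.y i}

/-- The vertices of the windmill graph: the vertices of `H 0, H 1, H 2`,
the nine new vertices `a i, b i, c i` and the new vertex `u`. -/
def Vert : Type := (Σ i : Fin 3, D.HVert i) ⊕ ((Fin 3 × Fin 3) ⊕ Unit)

/-- A vertex of `H i`, as a vertex of the windmill graph. -/
def hv {i : Fin 3} (v : D.HVert i) : D.Vert := Sum.inl ⟨i, v⟩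
/-- The new vertex `a i`. -/
def av (i : Fin 3) : D.Vert := Sum.inr (Sum.inl (i, 0))
/-- The new vertex `b i`. -/
def bv (i : Fin 3) : D.Vert := Sum.inr (Sum.inl (i, 1))
/-- The new vertex `c i`. -/
def cv (i : Fin 3) : D.Vert := Sum.inr (Sum.inl (i, 2))
/-- The new vertex `u`. -/
def uv : D.Vert := Sum.inr (Sum.inr ())

/-- The vertex `x i ^ 0` of `H i`. -/
def x0v (i : Fin 3) : D.Vert := D.hv ⟨D.x0 i, (D.adj_xx0 i).ne', D.x0_ne_y i⟩
/-- The vertex `x i ^ 1` of `H i`. -/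
def x1v (i : Fin 3) : D.Vert := D.hv ⟨D.x1 i, (D.adj_xx1 i).ne', D.x1_ne_y i⟩
/-- The vertex `y i ^ 0` of `H i`. -/
def y0v (i : Fin 3) : D.Vert := D.hv ⟨D.y0 i, D.y0_ne_x i, (D.adj_yy0 i).ne'⟩
/-- The vertex `y i ^ 1` of `H i`. -/
def y1v (i : Fin 3) : D.Vert := D.hv ⟨D.y1 i, D.y1_ne_x i, (D.adj_yy1 i).ne'⟩

/-- The adjacency relation of the windmill construction: edges inside each `H i`;
`a i` joined to `x (i+1) ^ 0` and `y (i-1) ^ 0`; `b i` joined to `x (i+1) ^ 1`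
and `y (i-1) ^ 1`; and `c i` joined to `a i`, `b i` and `u`. -/
def rel : D.Vert → D.Vert → Prop := fun p q =>
  (∃ (i : Fin 3) (v w : D.HVert i), (D.G i).Adj v.1 w.1 ∧ p = D.hv v ∧ q = D.hv w) ∨
  (∃ i : Fin 3, p = D.av i ∧ q = D.x0v (i + 1)) ∨
  (∃ i : Fin 3, p = D.av i ∧ q = D.y0v (i - 1)) ∨
  (∃ i : Fin 3, p = D.bv i ∧ q = D.x1v (i + 1)) ∨
  (∃ i : Fin 3, p = D.bv i ∧ q = D.y1v (i - 1)) ∨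
  (∃ i : Fin 3, p = D.cv i ∧ (q = D.av i ∨ q = D.bv i ∨ q = D.uv))

/-- The graph obtained from `G 0, G 1, G 2` by the windmill construction. -/
def graph : SimpleGraph D.Vert := SimpleGraph.fromRel D.rel

/-- The set of vertices of `H i` inside the windmill graph. -/
def Hset (i : Fin 3) : Set D.Vert := {p | ∃ v : D.HVert i, p = D.hv v}

/-- The set `A i = {a i, b i, c i}`. -/
def Aset (i : Fin 3) : Set D.Vert := {D.av i, D.bv i, D.cv i}

/-- A set of edges is of type 0 on `H i` if it misses `∂ H i`. -/
def Type0On (M : Set (Sym2 D.Vert)) (i : Fin 3) : Prop :=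
  (M ∩ edgeBoundary D.graph (D.Hset i)).ncard = 0

/-- A set of edges is of type 1 on `H i` if it has exactly one edge to
`A (i-1)` and exactly one edge to `A (i+1)`. -/
def Type1On (M : Set (Sym2 D.Vert)) (i : Fin 3) : Prop :=
  (M ∩ edgesBetween D.graph (D.Hset i) (D.Aset (i - 1))).ncard = 1 ∧
  (M ∩ edgesBetween D.graph (D.Hset i) (D.Aset (i + 1))).ncard = 1

/-- A set of edges is of type 2 on `H i` if it has exactly two edges in
`∂ H i` but is not of type 1. -/
def Type2On (M : Set (Sym2 D.Vert)) (i : Fin 3) : Prop :=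
  (M ∩ edgeBoundary D.graph (D.Hset i)).ncard = 2 ∧ ¬ D.Type1On M i

/-- For `i ≠ j`, the edge connecting `H i` to `a j`. -/
def eEdge (i j : Fin 3) : Sym2 D.Vert :=
  if i = j + 1 then s(D.av j, D.x0v i) else s(D.av j, D.y0v i)

/-- For `i ≠ j`, the edge connecting `H i` to `b j`. -/
def fEdge (i j : Fin 3) : Sym2 D.Vert :=
  if i = j + 1 then s(D.bv j, D.x1v i) else s(D.bv j, D.y1v i)

end WindmillData

/-- A Berge–Fulkerson cover: six perfect matchings such that every edge belongs
to precisely two of them. -/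
def HasBFCover {V : Type*} (G : SimpleGraph V) : Prop :=
  ∃ M : Fin 6 → G.Subgraph, (∀ i, (M i).IsPerfectMatching) ∧
    ∀ e ∈ G.edgeSet, ({i : Fin 6 | e ∈ (M i).edgeSet}).ncard = 2

/-- If `G 0, G 1, G 2` are cubic bridgeless graphs each
admitting a Berge–Fulkerson cover, then any graph obtained from them by the
windmill construction admits a Berge–Fulkerson cover. -/

-- ===================== auxiliary development =====================

def Wjj (s : Fin 6) : Fin 3 := ⟨s.val / 2, by omega⟩
def Wrr (s : Fin 6) : Fin 2 := ⟨s.val % 2, by omega⟩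

lemma fin3_cases (j k : Fin 3) : j = k ∨ j = k + 1 ∨ j = k - 1 := by revert j k; decide
lemma fin3_add_ne (k : Fin 3) : k + 1 ≠ k := by revert k; decide
lemma fin3_sub_ne (k : Fin 3) : k - 1 ≠ k := by revert k; decide
lemma fin3_add_ne_sub (k : Fin 3) : k + 1 ≠ k - 1 := by revert k; decide
lemma fin3_sub_add (k : Fin 3) : k - 1 + 1 = k := by revert k; decide
lemma fin3_add_sub (k : Fin 3) : k + 1 - 1 = k := by revert k; decide
lemma fin3_sub_sub (k : Fin 3) : k - 1 - 1 = k + 1 := by revert k; decide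
lemma fin3_add_add (k : Fin 3) : k + 1 + 1 = k - 1 := by revert k; decide

namespace WindmillData

variable {D : WindmillData}

/-- The data of six reindexed perfect-matching partner functions on each `G i`,
with the slot conditions needed for the windmill construction. -/
structure MData (D : WindmillData) where
  m : ∀ i : Fin 3, Fin 6 → D.V i → D.V i
  inv : ∀ i s v, m i s (m i s v) = v
  madj : ∀ i s v, (D.G i).Adj v (m i s v)
  hx : ∀ i s, Wjj s = i → m i s (D.x i) = D.y i
  hx2 : ∀ i s, Wjj s = i - 1 → m i s (D.x i) = (if Wrr s = 0 then D.x0 i else D.x1 i)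
  hy2 : ∀ i s, Wjj s = i + 1 → m i s (D.y i) = (if Wrr s = 0 then D.y1 i else D.y0 i)
  clx : ∀ i s, m i s (D.x i) = D.y i ∨ m i s (D.x i) = D.x0 i ∨ m i s (D.x i) = D.x1 i
  cly : ∀ i s, m i s (D.y i) = D.x i ∨ m i s (D.y i) = D.y0 i ∨ m i s (D.y i) = D.y1 i
  cov : ∀ i (v w : D.V i), (D.G i).Adj v w → ({s : Fin 6 | m i s v = w}).ncard = 2

variable (W : MData D)

open Classical in
/-- partner of `a k` in the matching number `s`. -/
noncomputable def fA (s : Fin 6) (k : Fin 3) : D.Vert :=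
  if Wjj s = k then (if Wrr s = 0 then D.x0v (k+1) else D.y0v (k-1))
  else if Wjj s = k - 1 then
    (if W.m (k+1) s (D.x (k+1)) = D.x0 (k+1) then D.x0v (k+1) else D.cv k)
  else (if W.m (k-1) s (D.y (k-1)) = D.y0 (k-1) then D.y0v (k-1) else D.cv k)

open Classical in
/-- partner of `b k`. -/
noncomputable def fB (s : Fin 6) (k : Fin 3) : D.Vert :=
  if Wjj s = k then (if Wrr s = 0 then D.y1v (k-1) else D.x1v (k+1))
  else if Wjj s = k - 1 then
    (if W.m (k+1) s (D.x (k+1)) = D.x1 (k+1) then D.x1v (k+1) else D.cv k)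
  else (if W.m (k-1) s (D.y (k-1)) = D.y1 (k-1) then D.y1v (k-1) else D.cv k)

open Classical in
/-- partner of `c k`. -/
noncomputable def fC (s : Fin 6) (k : Fin 3) : D.Vert :=
  if Wjj s = k then D.uv
  else if Wjj s = k - 1 then
    (if W.m (k+1) s (D.x (k+1)) = D.x0 (k+1) then D.bv k else D.av k)
  else (if W.m (k-1) s (D.y (k-1)) = D.y0 (k-1) then D.bv k else D.av k)

/-- package a vertex of `G i` distinct from `x i, y i` as a vertex of `H i`. -/
def mkH {i : Fin 3} (v : D.V i) (h : v ≠ D.x i) (h' : v ≠ D.y i) : D.HVert i :=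
  Subtype.mk v (And.intro h h')

open Classical in
/-- partner of a vertex of `H i`. -/
noncomputable def fH (s : Fin 6) (i : Fin 3) (v : D.HVert i) : D.Vert :=
  if h : W.m i s v.1 = D.x i then (if v.1 = D.x0 i then D.av (i-1) else D.bv (i-1))
  else if h' : W.m i s v.1 = D.y i then (if v.1 = D.y0 i then D.av (i+1) else D.bv (i+1))
  else D.hv (mkH (W.m i s v.1) h h')

open Classical in
/-- The partner function of the `s`-th perfect matching of the windmill graph. -/
noncomputable def ff (s : Fin 6) : D.Vert → D.Vert
  | .inl ⟨i, v⟩ => fH W s i v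
  | .inr (.inl (k, t)) => if t = 0 then fA W s k else if t = 1 then fB W s k else fC W s k
  | .inr (.inr _) => D.cv (Wjj s)

lemma ff_hv (s : Fin 6) (i : Fin 3) (v : D.HVert i) : ff W s (D.hv v) = fH W s i v := rfl
lemma ff_av (s : Fin 6) (k : Fin 3) : ff W s (D.av k) = fA W s k := rfl
lemma ff_bv (s : Fin 6) (k : Fin 3) : ff W s (D.bv k) = fB W s k := rfl
lemma ff_cv (s : Fin 6) (k : Fin 3) : ff W s (D.cv k) = fC W s k := rfl
lemma ff_uv (s : Fin 6) : ff W s D.uv = D.cv (Wjj s) := rfl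

end WindmillData

namespace WindmillData
variable {D : WindmillData}

/-- A numeric tag distinguishing the special vertices. -/
def tagN : D.Vert → ℕ := fun p =>
  match p with
  | .inl ⟨_, _⟩ => 0
  | .inr (.inl (k, t)) => 1 + k.val + 3 * t.val
  | .inr (.inr _) => 100

/-- The `H`-index of a vertex (0 for special vertices). -/
def tagI : D.Vert → Fin 3 := fun p =>
  match p with
  | .inl ⟨i, _⟩ => i
  | .inr _ => 0

lemma tagN_hv {i : Fin 3} (v : D.HVert i) : tagN (D.hv v) = 0 := rfl
lemma tagN_av (k : Fin 3) : tagN (D.av k) = 1 + k.val := rfl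
lemma tagN_bv (k : Fin 3) : tagN (D.bv k) = 4 + k.val := by
  show 1 + k.val + 3 * 1 = 4 + k.val; omega
lemma tagN_cv (k : Fin 3) : tagN (D.cv k) = 7 + k.val := by
  show 1 + k.val + 3 * 2 = 7 + k.val; omega
lemma tagN_uv : tagN (D.uv) = 100 := rfl
lemma tagI_hv {i : Fin 3} (v : D.HVert i) : tagI (D.hv v) = i := rfl

lemma hv_ne_av {i : Fin 3} (v : D.HVert i) (k : Fin 3) : D.hv v ≠ D.av k := by
  intro h; have := congrArg tagN h; rw [tagN_hv, tagN_av] at this; omega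
lemma hv_ne_bv {i : Fin 3} (v : D.HVert i) (k : Fin 3) : D.hv v ≠ D.bv k := by
  intro h; have := congrArg tagN h; rw [tagN_hv, tagN_bv] at this; omega
lemma hv_ne_cv {i : Fin 3} (v : D.HVert i) (k : Fin 3) : D.hv v ≠ D.cv k := by
  intro h; have := congrArg tagN h; rw [tagN_hv, tagN_cv] at this; omega
lemma hv_ne_uv {i : Fin 3} (v : D.HVert i) : D.hv v ≠ D.uv := by
  intro h; have := congrArg tagN h; rw [tagN_hv, tagN_uv] at this; omega
lemma av_ne_bv (k k' : Fin 3) : D.av k ≠ D.bv k' := by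
  intro h; have := congrArg tagN h; rw [tagN_av, tagN_bv] at this; omega
lemma av_ne_cv (k k' : Fin 3) : D.av k ≠ D.cv k' := by
  intro h; have := congrArg tagN h; rw [tagN_av, tagN_cv] at this; omega
lemma bv_ne_cv (k k' : Fin 3) : D.bv k ≠ D.cv k' := by
  intro h; have := congrArg tagN h; rw [tagN_bv, tagN_cv] at this; omega
lemma av_ne_uv (k : Fin 3) : D.av k ≠ D.uv := by
  intro h; have := congrArg tagN h; rw [tagN_av, tagN_uv] at this; omega
lemma bv_ne_uv (k : Fin 3) : D.bv k ≠ D.uv := by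
  intro h; have := congrArg tagN h; rw [tagN_bv, tagN_uv] at this; omega
lemma cv_ne_uv (k : Fin 3) : D.cv k ≠ D.uv := by
  intro h; have := congrArg tagN h; rw [tagN_cv, tagN_uv] at this; omega
lemma av_inj {k k' : Fin 3} (h : D.av k = D.av k') : k = k' := by
  have := congrArg tagN h; rw [tagN_av, tagN_av] at this; omega
lemma bv_inj {k k' : Fin 3} (h : D.bv k = D.bv k') : k = k' := by
  have := congrArg tagN h; rw [tagN_bv, tagN_bv] at this; omega
lemma cv_inj {k k' : Fin 3} (h : D.cv k = D.cv k') : k = k' := by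
  have := congrArg tagN h; rw [tagN_cv, tagN_cv] at this; omega

lemma hv_ne_hv_of_ne {i i' : Fin 3} (v : D.HVert i) (w : D.HVert i') (h : i ≠ i') :
    D.hv v ≠ D.hv w := by
  intro hh; have := congrArg tagI hh; rw [tagI_hv, tagI_hv] at this; exact h this

lemma hv_inj {i : Fin 3} {v w : D.HVert i} (h : D.hv v = D.hv w) : v = w := by
  have h2 : (Sum.inl ⟨i, v⟩ : D.Vert) = Sum.inl ⟨i, w⟩ := h
  have h3 := Sum.inl.inj h2
  exact eq_of_heq (Sigma.mk.inj_iff.1 h3).2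

lemma hv_val_inj {i : Fin 3} {v w : D.HVert i} (h : (D.hv v) = D.hv w) : v.1 = w.1 :=
  congrArg Subtype.val (hv_inj h)

end WindmillData

namespace WindmillData
variable {D : WindmillData}

lemma adj_of_rel {p q : D.Vert} (hne : p ≠ q) (h : D.rel p q) : D.graph.Adj p q :=
  (SimpleGraph.fromRel_adj D.rel p q).2 ⟨hne, Or.inl h⟩

lemma adj_hh {i : Fin 3} {v w : D.HVert i} (h : (D.G i).Adj v.1 w.1) :
    D.graph.Adj (D.hv v) (D.hv w) := by
  refine adj_of_rel ?_ (Or.inl ⟨i, v, w, h, rfl, rfl⟩)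
  intro hh; exact h.ne (hv_val_inj hh)

lemma adj_ax0 (k : Fin 3) : D.graph.Adj (D.av k) (D.x0v (k + 1)) :=
  adj_of_rel (Ne.symm (hv_ne_av _ _)) (Or.inr (Or.inl ⟨k, rfl, rfl⟩))

lemma adj_ay0 (k : Fin 3) : D.graph.Adj (D.av k) (D.y0v (k - 1)) :=
  adj_of_rel (Ne.symm (hv_ne_av _ _)) (Or.inr (Or.inr (Or.inl ⟨k, rfl, rfl⟩)))

lemma adj_bx1 (k : Fin 3) : D.graph.Adj (D.bv k) (D.x1v (k + 1)) :=
  adj_of_rel (Ne.symm (hv_ne_bv _ _)) (Or.inr (Or.inr (Or.inr (Or.inl ⟨k, rfl, rfl⟩))))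

lemma adj_by1 (k : Fin 3) : D.graph.Adj (D.bv k) (D.y1v (k - 1)) :=
  adj_of_rel (Ne.symm (hv_ne_bv _ _)) (Or.inr (Or.inr (Or.inr (Or.inr (Or.inl ⟨k, rfl, rfl⟩)))))

lemma adj_ca (k : Fin 3) : D.graph.Adj (D.cv k) (D.av k) :=
  adj_of_rel (Ne.symm (av_ne_cv _ _)) (Or.inr (Or.inr (Or.inr (Or.inr (Or.inr ⟨k, rfl, Or.inl rfl⟩)))))

lemma adj_cb (k : Fin 3) : D.graph.Adj (D.cv k) (D.bv k) :=
  adj_of_rel (Ne.symm (bv_ne_cv _ _)) (Or.inr (Or.inr (Or.inr (Or.inr (Or.inr ⟨k, rfl, Or.inr (Or.inl rfl)⟩)))))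

lemma adj_cu (k : Fin 3) : D.graph.Adj (D.cv k) D.uv :=
  adj_of_rel (cv_ne_uv _) (Or.inr (Or.inr (Or.inr (Or.inr (Or.inr ⟨k, rfl, Or.inr (Or.inr rfl)⟩)))))

variable (W : MData D)

/-- classification of the partner of an `H`-vertex matched to `x i`. -/
lemma partner_x_cases {i : Fin 3} (s : Fin 6) {v : D.HVert i} (h : W.m i s v.1 = D.x i) :
    v.1 = D.x0 i ∨ v.1 = D.x1 i := by
  have hmx : W.m i s (D.x i) = v.1 := by
    have h0 := W.inv i s v.1; rw [h] at h0; exact h0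
  rcases W.clx i s with h1 | h1 | h1
  · exfalso; rw [hmx] at h1; exact v.2.2 h1
  · left; rw [← hmx, h1]
  · right; rw [← hmx, h1]

lemma partner_y_cases {i : Fin 3} (s : Fin 6) {v : D.HVert i} (h : W.m i s v.1 = D.y i) :
    v.1 = D.y0 i ∨ v.1 = D.y1 i := by
  have hmy : W.m i s (D.y i) = v.1 := by
    have h0 := W.inv i s v.1; rw [h] at h0; exact h0
  rcases W.cly i s with h1 | h1 | h1
  · exfalso; rw [hmy] at h1; exact v.2.1 h1
  · left; rw [← hmy, h1]
  · right; rw [← hmy, h1]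

lemma ff_adj (s : Fin 6) (p : D.Vert) : D.graph.Adj p (ff W s p) := by
  classical
  obtain (⟨i, v⟩ | (⟨k, t⟩ | _)) := p
  · -- H vertex
    rw [show (Sum.inl ⟨i, v⟩ : D.Vert) = D.hv v from rfl, ff_hv]
    unfold fH
    split_ifs with h1 h2 h3 h4
    · -- partner is x, v = x0
      have : D.hv v = D.x0v i := by
        unfold x0v; exact congrArg D.hv (Subtype.ext h2)
      rw [this]
      have := (D.adj_ax0 (i - 1)).symm
      rwa [fin3_sub_add] at this
    · -- partner is x, v = x1
      rcases partner_x_cases W s h1 with h | h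
      · exact absurd h h2
      have : D.hv v = D.x1v i := by
        unfold x1v; exact congrArg D.hv (Subtype.ext h)
      rw [this]
      have := (D.adj_bx1 (i - 1)).symm
      rwa [fin3_sub_add] at this
    · -- partner is y, v = y0
      have : D.hv v = D.y0v i := by
        unfold y0v; exact congrArg D.hv (Subtype.ext h4)
      rw [this]
      have := (D.adj_ay0 (i + 1)).symm
      rwa [fin3_add_sub] at this
    · rcases partner_y_cases W s h3 with h | h
      · exact absurd h h4
      have : D.hv v = D.y1v i := by
        unfold y1v; exact congrArg D.hv (Subtype.ext h)
      rw [this]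
      have := (D.adj_by1 (i + 1)).symm
      rwa [fin3_add_sub] at this
    · exact adj_hh (W.madj i s v.1)
  · -- special vertex (k, t)
    fin_cases t
    · -- a k
      show D.graph.Adj (D.av k) (ff W s (D.av k))
      rw [ff_av]
      unfold fA
      split_ifs with h1 h2 h3 h4 h5
      · exact adj_ax0 k
      · exact adj_ay0 k
      · exact adj_ax0 k
      · exact (adj_ca k).symm
      · exact adj_ay0 k
      · exact (adj_ca k).symm
    · -- b k
      show D.graph.Adj (D.bv k) (ff W s (D.bv k))
      rw [ff_bv]
      unfold fB
      split_ifs with h1 h2 h3 h4 h5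
      · exact adj_by1 k
      · exact adj_bx1 k
      · exact adj_bx1 k
      · exact (adj_cb k).symm
      · exact adj_by1 k
      · exact (adj_cb k).symm
    · -- c k
      show D.graph.Adj (D.cv k) (ff W s (D.cv k))
      rw [ff_cv]
      unfold fC
      split_ifs with h1 h2 h3 h4 h5
      · exact adj_cu k
      · exact adj_cb k
      · exact adj_ca k
      · exact adj_cb k
      · exact adj_ca k
  · -- u
    rw [show (Sum.inr (Sum.inr _) : D.Vert) = D.uv from rfl, ff_uv]
    exact (adj_cu (Wjj s)).symm

end WindmillData

namespace WindmillData
variable {D : WindmillData} (W : MData D)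

lemma ff_x0v {i : Fin 3} {s : Fin 6} (hm : W.m i s (D.x i) = D.x0 i) :
    ff W s (D.x0v i) = D.av (i - 1) := by
  have h1 : W.m i s (D.x0 i) = D.x i := by
    have h0 := W.inv i s (D.x i); rw [hm] at h0; exact h0
  rw [x0v]; erw [ff_hv]; unfold fH
  simp [h1]

lemma ff_x1v {i : Fin 3} {s : Fin 6} (hm : W.m i s (D.x i) = D.x1 i) :
    ff W s (D.x1v i) = D.bv (i - 1) := by
  have h1 : W.m i s (D.x1 i) = D.x i := by
    have h0 := W.inv i s (D.x i); rw [hm] at h0; exact h0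
  rw [x1v]; erw [ff_hv]; unfold fH
  simp [h1, (D.x0_ne_x1 i).symm]

lemma ff_y0v {i : Fin 3} {s : Fin 6} (hm : W.m i s (D.y i) = D.y0 i) :
    ff W s (D.y0v i) = D.av (i + 1) := by
  have h1 : W.m i s (D.y0 i) = D.y i := by
    have h0 := W.inv i s (D.y i); rw [hm] at h0; exact h0
  rw [y0v]; erw [ff_hv]; unfold fH
  simp [h1, (D.adj_xy i).ne']

lemma ff_y1v {i : Fin 3} {s : Fin 6} (hm : W.m i s (D.y i) = D.y1 i) :
    ff W s (D.y1v i) = D.bv (i + 1) := by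
  have h1 : W.m i s (D.y1 i) = D.y i := by
    have h0 := W.inv i s (D.y i); rw [hm] at h0; exact h0
  rw [y1v]; erw [ff_hv]; unfold fH
  simp [h1, (D.adj_xy i).ne', (D.y0_ne_y1 i).symm]

end WindmillData

namespace WindmillData
variable {D : WindmillData} (W : MData D)

/-- If slot `s` lies in `P (k+1)`, then the matching on `G (k-1)` does not match
`y (k-1)` to `x (k-1)`, hence to `y0` or `y1`. -/
lemma slot_y_cases {k : Fin 3} {s : Fin 6} (hj : Wjj s = k + 1) :
    W.m (k-1) s (D.y (k-1)) = D.y0 (k-1) ∨ W.m (k-1) s (D.y (k-1)) = D.y1 (k-1) := by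
  have hx := W.hx2 (k-1) s (by rw [hj, fin3_sub_sub])
  rcases W.cly (k-1) s with h | h | h
  · exfalso
    have h0 := W.inv (k-1) s (D.y (k-1)); rw [h] at h0
    rw [hx] at h0
    by_cases hr : Wrr s = 0
    · rw [if_pos hr] at h0; exact D.x0_ne_y _ h0
    · rw [if_neg hr] at h0; exact D.x1_ne_y _ h0
  · exact Or.inl h
  · exact Or.inr h

/-- If slot `s` lies in `P (k-1)`, the matching on `G (k+1)` matches `x (k+1)` to
`x0` or `x1`. -/
lemma slot_x_cases {k : Fin 3} {s : Fin 6} (hj : Wjj s = k - 1) :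
    W.m (k+1) s (D.x (k+1)) = D.x0 (k+1) ∨ W.m (k+1) s (D.x (k+1)) = D.x1 (k+1) := by
  have hy := W.hy2 (k+1) s (by rw [hj, fin3_add_add])
  rcases W.clx (k+1) s with h | h | h
  · exfalso
    have h0 := W.inv (k+1) s (D.x (k+1)); rw [h] at h0
    rw [hy] at h0
    by_cases hr : Wrr s = 0
    · rw [if_pos hr] at h0; exact D.y1_ne_x _ h0
    · rw [if_neg hr] at h0; exact D.y0_ne_x _ h0
  · exact Or.inl h
  · exact Or.inr h

lemma fin3_ne_add (k : Fin 3) : k ≠ k + 1 := (fin3_add_ne k).symm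
lemma fin3_ne_sub (k : Fin 3) : k ≠ k - 1 := (fin3_sub_ne k).symm
lemma fin3_sub_ne_add (k : Fin 3) : k - 1 ≠ k + 1 := (fin3_add_ne_sub k).symm

lemma ff_inv (s : Fin 6) (p : D.Vert) : ff W s (ff W s p) = p := by
  classical
  obtain (⟨i, v⟩ | (⟨k, t⟩ | _)) := p
  · -- H vertex
    rw [show (Sum.inl ⟨i, v⟩ : D.Vert) = D.hv v from rfl, ff_hv]
    unfold fH
    split_ifs with h1 h2 h3 h4
    · -- m v = x i, v = x0 i
      have hmx : W.m i s (D.x i) = D.x0 i := by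
        have h0 := W.inv i s v.1; rw [h1] at h0; rw [h0, h2]
      have heq : D.hv v = D.x0v i := by unfold x0v; exact congrArg D.hv (Subtype.ext h2)
      rcases fin3_cases (Wjj s) i with hj | hj | hj
      · exact absurd ((W.hx i s hj).symm.trans hmx) (D.x0_ne_y i).symm
      · -- j = i + 1
        have hmx' : W.m (i-1+1) s (D.x (i-1+1)) = D.x0 (i-1+1) := by
          rw [fin3_sub_add]; exact hmx
        rw [ff_av]; unfold fA
        rw [if_neg (by rw [hj]; exact fin3_add_ne_sub i),
            if_pos (by rw [hj, fin3_sub_sub]), if_pos hmx']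
        rw [fin3_sub_add]; exact heq.symm
      · -- j = i - 1
        have hrr : Wrr s = 0 := by
          by_contra hr
          have := W.hx2 i s hj; rw [if_neg hr] at this
          exact D.x0_ne_x1 i (hmx.symm.trans this)
        rw [ff_av]; unfold fA
        rw [if_pos hj, if_pos hrr, fin3_sub_add]; exact heq.symm
    · -- m v = x i, v = x1 i
      have hv1 : v.1 = D.x1 i := (partner_x_cases W s h1).resolve_left h2
      have hmx : W.m i s (D.x i) = D.x1 i := by
        have h0 := W.inv i s v.1; rw [h1] at h0; rw [h0, hv1]
      have heq : D.hv v = D.x1v i := by unfold x1v; exact congrArg D.hv (Subtype.ext hv1)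
      rcases fin3_cases (Wjj s) i with hj | hj | hj
      · exact absurd ((W.hx i s hj).symm.trans hmx) (D.x1_ne_y i).symm
      · have hmx' : W.m (i-1+1) s (D.x (i-1+1)) = D.x1 (i-1+1) := by
          rw [fin3_sub_add]; exact hmx
        rw [ff_bv]; unfold fB
        rw [if_neg (by rw [hj]; exact fin3_add_ne_sub i),
            if_pos (by rw [hj, fin3_sub_sub]), if_pos hmx']
        rw [fin3_sub_add]; exact heq.symm
      · have hrr : ¬ Wrr s = 0 := by
          intro hr
          have := W.hx2 i s hj; rw [if_pos hr] at this
          exact D.x0_ne_x1 i (this.symm.trans hmx)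
        rw [ff_bv]; unfold fB
        rw [if_pos hj, if_neg hrr, fin3_sub_add]; exact heq.symm
    · -- m v = y i, v = y0 i
      have hmy : W.m i s (D.y i) = D.y0 i := by
        have h0 := W.inv i s v.1; rw [h3] at h0; rw [h0, h4]
      have heq : D.hv v = D.y0v i := by unfold y0v; exact congrArg D.hv (Subtype.ext h4)
      rcases fin3_cases (Wjj s) i with hj | hj | hj
      · exfalso
        have h0 := W.inv i s (D.x i); rw [W.hx i s hj] at h0
        rw [hmy] at h0; exact D.y0_ne_x i h0
      · -- j = i + 1 : fA at k = i+1, first branch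
        have hrr : ¬ Wrr s = 0 := by
          intro hr
          have := W.hy2 i s hj; rw [if_pos hr] at this
          exact D.y0_ne_y1 i (hmy.symm.trans this)
        rw [ff_av]; unfold fA
        rw [if_pos hj, if_neg hrr, fin3_add_sub]; exact heq.symm
      · -- j = i - 1 : fA at k = i+1, third branch
        have hmy' : W.m (i+1-1) s (D.y (i+1-1)) = D.y0 (i+1-1) := by
          rw [fin3_add_sub]; exact hmy
        rw [ff_av]; unfold fA
        rw [if_neg (by rw [hj]; exact fin3_sub_ne_add i),
            if_neg (by rw [hj, fin3_add_sub]; exact fin3_sub_ne i), if_pos hmy']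
        rw [fin3_add_sub]; exact heq.symm
    · -- m v = y i, v = y1 i
      have hv1 : v.1 = D.y1 i := (partner_y_cases W s h3).resolve_left h4
      have hmy : W.m i s (D.y i) = D.y1 i := by
        have h0 := W.inv i s v.1; rw [h3] at h0; rw [h0, hv1]
      have heq : D.hv v = D.y1v i := by unfold y1v; exact congrArg D.hv (Subtype.ext hv1)
      rcases fin3_cases (Wjj s) i with hj | hj | hj
      · exfalso
        have h0 := W.inv i s (D.x i); rw [W.hx i s hj] at h0
        rw [hmy] at h0; exact D.y1_ne_x i h0
      · have hrr : Wrr s = 0 := by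
          by_contra hr
          have := W.hy2 i s hj; rw [if_neg hr] at this
          exact D.y0_ne_y1 i (this.symm.trans hmy)
        rw [ff_bv]; unfold fB
        rw [if_pos hj, if_pos hrr, fin3_add_sub]; exact heq.symm
      · have hmy' : W.m (i+1-1) s (D.y (i+1-1)) = D.y1 (i+1-1) := by
          rw [fin3_add_sub]; exact hmy
        rw [ff_bv]; unfold fB
        rw [if_neg (by rw [hj]; exact fin3_sub_ne_add i),
            if_neg (by rw [hj, fin3_add_sub]; exact fin3_sub_ne i), if_pos hmy']
        rw [fin3_add_sub]; exact heq.symm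
    · -- internal
      have h0 := W.inv i s v.1
      rw [ff_hv]; unfold fH
      simp only [mkH]
      erw [dif_neg (show ¬ W.m i s (W.m i s v.1) = D.x i by rw [h0]; exact v.2.1), dif_neg (show ¬ W.m i s (W.m i s v.1) = D.y i by rw [h0]; exact v.2.2)]
      unfold hv mkH
      congr 1
      exact Sigma.ext rfl (heq_of_eq (Subtype.ext h0))
  · -- special vertices
    fin_cases t
    · -- a k
      show ff W s (ff W s (D.av k)) = D.av k
      rw [ff_av]; unfold fA
      rcases fin3_cases (Wjj s) k with hj | hj | hj
      · rw [if_pos hj]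
        by_cases hr : Wrr s = 0
        · rw [if_pos hr]
          have hm := W.hx2 (k+1) s (by rw [fin3_add_sub]; exact hj)
          rw [if_pos hr] at hm
          rw [ff_x0v W hm, fin3_add_sub]
        · rw [if_neg hr]
          have hm := W.hy2 (k-1) s (by rw [fin3_sub_add]; exact hj)
          rw [if_neg hr] at hm
          rw [ff_y0v W hm, fin3_sub_add]
      · -- j = k + 1 : third branch
        rw [if_neg (by rw [hj]; exact fin3_add_ne k),
            if_neg (by rw [hj]; exact fin3_add_ne_sub k)]
        by_cases hm : W.m (k-1) s (D.y (k-1)) = D.y0 (k-1)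
        · rw [if_pos hm, ff_y0v W hm, fin3_sub_add]
        · rw [if_neg hm, ff_cv]; unfold fC
          rw [if_neg (by rw [hj]; exact fin3_add_ne k),
              if_neg (by rw [hj]; exact fin3_add_ne_sub k), if_neg hm]
      · -- j = k - 1 : second branch
        rw [if_neg (by rw [hj]; exact fin3_sub_ne k), if_pos hj]
        by_cases hm : W.m (k+1) s (D.x (k+1)) = D.x0 (k+1)
        · rw [if_pos hm, ff_x0v W hm, fin3_add_sub]
        · rw [if_neg hm, ff_cv]; unfold fC
          rw [if_neg (by rw [hj]; exact fin3_sub_ne k), if_pos hj, if_neg hm]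
    · -- b k
      show ff W s (ff W s (D.bv k)) = D.bv k
      rw [ff_bv]; unfold fB
      rcases fin3_cases (Wjj s) k with hj | hj | hj
      · rw [if_pos hj]
        by_cases hr : Wrr s = 0
        · rw [if_pos hr]
          have hm := W.hy2 (k-1) s (by rw [fin3_sub_add]; exact hj)
          rw [if_pos hr] at hm
          rw [ff_y1v W hm, fin3_sub_add]
        · rw [if_neg hr]
          have hm := W.hx2 (k+1) s (by rw [fin3_add_sub]; exact hj)
          rw [if_neg hr] at hm
          rw [ff_x1v W hm, fin3_add_sub]
      · -- j = k + 1 : third branch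
        rw [if_neg (by rw [hj]; exact fin3_add_ne k),
            if_neg (by rw [hj]; exact fin3_add_ne_sub k)]
        by_cases hm : W.m (k-1) s (D.y (k-1)) = D.y1 (k-1)
        · rw [if_pos hm, ff_y1v W hm, fin3_sub_add]
        · rw [if_neg hm, ff_cv]; unfold fC
          have hm0 : W.m (k-1) s (D.y (k-1)) = D.y0 (k-1) :=
            (slot_y_cases W hj).resolve_right hm
          rw [if_neg (by rw [hj]; exact fin3_add_ne k),
              if_neg (by rw [hj]; exact fin3_add_ne_sub k), if_pos hm0]
      · -- j = k - 1 : second branch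
        rw [if_neg (by rw [hj]; exact fin3_sub_ne k), if_pos hj]
        by_cases hm : W.m (k+1) s (D.x (k+1)) = D.x1 (k+1)
        · rw [if_pos hm, ff_x1v W hm, fin3_add_sub]
        · rw [if_neg hm, ff_cv]; unfold fC
          have hm0 : W.m (k+1) s (D.x (k+1)) = D.x0 (k+1) :=
            (slot_x_cases W hj).resolve_right hm
          rw [if_neg (by rw [hj]; exact fin3_sub_ne k), if_pos hj, if_pos hm0]
    · -- c k
      show ff W s (ff W s (D.cv k)) = D.cv k
      rw [ff_cv]; unfold fC
      rcases fin3_cases (Wjj s) k with hj | hj | hj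
      · rw [if_pos hj, ff_uv, hj]
      · -- j = k + 1: third branch
        rw [if_neg (by rw [hj]; exact fin3_add_ne k),
            if_neg (by rw [hj]; exact fin3_add_ne_sub k)]
        by_cases hm : W.m (k-1) s (D.y (k-1)) = D.y0 (k-1)
        · rw [if_pos hm, ff_bv]; unfold fB
          rw [if_neg (by rw [hj]; exact fin3_add_ne k),
              if_neg (by rw [hj]; exact fin3_add_ne_sub k),
              if_neg (by rw [hm]; exact fun hh => D.y0_ne_y1 (k-1) hh)]
        · rw [if_neg hm, ff_av]; unfold fA
          rw [if_neg (by rw [hj]; exact fin3_add_ne k),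
              if_neg (by rw [hj]; exact fin3_add_ne_sub k), if_neg hm]
      · -- j = k - 1: second branch
        rw [if_neg (by rw [hj]; exact fin3_sub_ne k), if_pos hj]
        by_cases hm : W.m (k+1) s (D.x (k+1)) = D.x0 (k+1)
        · rw [if_pos hm, ff_bv]; unfold fB
          rw [if_neg (by rw [hj]; exact fin3_sub_ne k), if_pos hj,
              if_neg (by rw [hm]; exact fun hh => D.x0_ne_x1 (k+1) hh)]
        · rw [if_neg hm, ff_av]; unfold fA
          rw [if_neg (by rw [hj]; exact fin3_sub_ne k), if_pos hj, if_neg hm]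
  · -- u
    rw [show (Sum.inr (Sum.inr _) : D.Vert) = D.uv from rfl, ff_uv, ff_cv]
    unfold fC
    rw [if_pos rfl]

end WindmillData

namespace WindmillData
variable {D : WindmillData} (W : MData D)

/-- The `s`-th perfect matching of the windmill graph. -/
noncomputable def NN (s : Fin 6) : D.graph.Subgraph where
  verts := Set.univ
  Adj p q := ff W s p = q ∨ ff W s q = p
  adj_sub := by
    rintro p q (rfl | h)
    · exact ff_adj W s p
    · rw [← h]; exact (ff_adj W s q).symm
  edge_vert := fun _ => Set.mem_univ _
  symm := ⟨fun p q h => Or.symm h⟩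

lemma NN_isPM (s : Fin 6) : (NN W s).IsPerfectMatching := by
  rw [SimpleGraph.Subgraph.isPerfectMatching_iff]
  intro v
  refine ⟨ff W s v, Or.inl rfl, ?_⟩
  rintro w (rfl | hw)
  · rfl
  · rw [← hw, ff_inv]

lemma mem_NN {s : Fin 6} {p q : D.Vert} :
    s(p, q) ∈ (NN W s).edgeSet ↔ ff W s p = q := by
  rw [SimpleGraph.Subgraph.mem_edgeSet]
  constructor
  · rintro (h | h)
    · exact h
    · rw [← h, ff_inv]
  · exact Or.inl

lemma count_jr (k : Fin 3) (r : Fin 2) : ({s : Fin 6 | Wjj s = k ∧ Wrr s = r}).ncard = 1 := by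
  have hset : {s : Fin 6 | Wjj s = k ∧ Wrr s = r} = {⟨2*k.val + r.val, by omega⟩} := by
    ext s
    simp only [Set.mem_setOf_eq, Set.mem_singleton_iff, Fin.ext_iff, Wjj, Wrr]
    omega
  rw [hset, Set.ncard_singleton]

lemma count_j (k : Fin 3) : ({s : Fin 6 | Wjj s = k}).ncard = 2 := by
  have hset : {s : Fin 6 | Wjj s = k} =
      {(⟨2*k.val, by omega⟩ : Fin 6), ⟨2*k.val + 1, by omega⟩} := by
    ext s
    simp only [Set.mem_setOf_eq, Set.mem_insert_iff, Set.mem_singleton_iff, Fin.ext_iff, Wjj]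
    omega
  rw [hset, Set.ncard_pair (by simp [Fin.ext_iff])]

lemma ncard_split {A B C : Set (Fin 6)} (h : A = B ∪ C) (hd : Disjoint B C)
    (hA : A.ncard = 2) (hB : B.ncard = 1) : C.ncard = 1 := by
  rw [h, Set.ncard_union_eq hd (Set.toFinite _) (Set.toFinite _), hB] at hA
  omega

lemma count_open_x0 (i : Fin 3) :
    ({s : Fin 6 | Wjj s = i + 1 ∧ W.m i s (D.x i) = D.x0 i}).ncard = 1 := by
  refine ncard_split (A := {s : Fin 6 | W.m i s (D.x i) = D.x0 i})
    (B := {s : Fin 6 | Wjj s = i - 1 ∧ Wrr s = 0}) ?_ ?_ ?_ (count_jr _ _)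
  · ext s
    simp only [Set.mem_setOf_eq, Set.mem_union]
    constructor
    · intro hm
      rcases fin3_cases (Wjj s) i with hj | hj | hj
      · exact absurd ((W.hx i s hj).symm.trans hm) (D.x0_ne_y i).symm
      · exact Or.inr ⟨hj, hm⟩
      · left
        refine ⟨hj, ?_⟩
        by_contra hr
        have := W.hx2 i s hj; rw [if_neg hr] at this
        exact D.x0_ne_x1 i ((hm.symm.trans this))
    · rintro (⟨hj, hr⟩ | ⟨hj, hm⟩)
      · have := W.hx2 i s hj; rw [if_pos hr] at this; exact this
      · exact hm
  · rw [Set.disjoint_left]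
    rintro s ⟨hj1, _⟩ ⟨hj2, _⟩
    rw [hj1] at hj2; exact fin3_sub_ne_add i hj2
  · exact W.cov i (D.x i) (D.x0 i) (D.adj_xx0 i)

lemma count_open_x1 (i : Fin 3) :
    ({s : Fin 6 | Wjj s = i + 1 ∧ W.m i s (D.x i) = D.x1 i}).ncard = 1 := by
  refine ncard_split (A := {s : Fin 6 | W.m i s (D.x i) = D.x1 i})
    (B := {s : Fin 6 | Wjj s = i - 1 ∧ Wrr s = 1}) ?_ ?_ ?_ (count_jr _ _)
  · ext s
    simp only [Set.mem_setOf_eq, Set.mem_union]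
    constructor
    · intro hm
      rcases fin3_cases (Wjj s) i with hj | hj | hj
      · exact absurd ((W.hx i s hj).symm.trans hm) (D.x1_ne_y i).symm
      · exact Or.inr ⟨hj, hm⟩
      · left
        refine ⟨hj, ?_⟩
        have hr : ¬ Wrr s = 0 := by
          intro hr
          have := W.hx2 i s hj; rw [if_pos hr] at this
          exact D.x0_ne_x1 i ((this.symm.trans hm))
        omega
    · rintro (⟨hj, hr⟩ | ⟨hj, hm⟩)
      · have := W.hx2 i s hj
        rw [if_neg (by rw [hr]; exact one_ne_zero)] at this; exact this
      · exact hm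
  · rw [Set.disjoint_left]
    rintro s ⟨hj1, _⟩ ⟨hj2, _⟩
    rw [hj1] at hj2; exact fin3_sub_ne_add i hj2
  · exact W.cov i (D.x i) (D.x1 i) (D.adj_xx1 i)

lemma count_open_y0 (i : Fin 3) :
    ({s : Fin 6 | Wjj s = i - 1 ∧ W.m i s (D.y i) = D.y0 i}).ncard = 1 := by
  refine ncard_split (A := {s : Fin 6 | W.m i s (D.y i) = D.y0 i})
    (B := {s : Fin 6 | Wjj s = i + 1 ∧ Wrr s = 1}) ?_ ?_ ?_ (count_jr _ _)
  · ext s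
    simp only [Set.mem_setOf_eq, Set.mem_union]
    constructor
    · intro hm
      rcases fin3_cases (Wjj s) i with hj | hj | hj
      · exfalso
        have h0 := W.inv i s (D.x i); rw [W.hx i s hj] at h0
        rw [hm] at h0; exact D.y0_ne_x i h0
      · left
        refine ⟨hj, ?_⟩
        have hr : ¬ Wrr s = 0 := by
          intro hr
          have := W.hy2 i s hj; rw [if_pos hr] at this
          exact D.y0_ne_y1 i ((hm.symm.trans this))
        omega
      · exact Or.inr ⟨hj, hm⟩
    · rintro (⟨hj, hr⟩ | ⟨hj, hm⟩)
      · have := W.hy2 i s hj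
        rw [if_neg (by rw [hr]; exact one_ne_zero)] at this; exact this
      · exact hm
  · rw [Set.disjoint_left]
    rintro s ⟨hj1, _⟩ ⟨hj2, _⟩
    rw [hj1] at hj2; exact fin3_add_ne_sub i hj2
  · exact W.cov i (D.y i) (D.y0 i) (D.adj_yy0 i)

lemma count_open_y1 (i : Fin 3) :
    ({s : Fin 6 | Wjj s = i - 1 ∧ W.m i s (D.y i) = D.y1 i}).ncard = 1 := by
  refine ncard_split (A := {s : Fin 6 | W.m i s (D.y i) = D.y1 i})
    (B := {s : Fin 6 | Wjj s = i + 1 ∧ Wrr s = 0}) ?_ ?_ ?_ (count_jr _ _)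
  · ext s
    simp only [Set.mem_setOf_eq, Set.mem_union]
    constructor
    · intro hm
      rcases fin3_cases (Wjj s) i with hj | hj | hj
      · exfalso
        have h0 := W.inv i s (D.x i); rw [W.hx i s hj] at h0
        rw [hm] at h0; exact D.y1_ne_x i h0
      · left
        refine ⟨hj, ?_⟩
        by_contra hr
        have := W.hy2 i s hj; rw [if_neg hr] at this
        exact D.y0_ne_y1 i ((this.symm.trans hm))
      · exact Or.inr ⟨hj, hm⟩
    · rintro (⟨hj, hr⟩ | ⟨hj, hm⟩)
      · have := W.hy2 i s hj; rw [if_pos hr] at this; exact this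
      · exact hm
  · rw [Set.disjoint_left]
    rintro s ⟨hj1, _⟩ ⟨hj2, _⟩
    rw [hj1] at hj2; exact fin3_add_ne_sub i hj2
  · exact W.cov i (D.y i) (D.y1 i) (D.adj_yy1 i)

end WindmillData

namespace WindmillData
variable {D : WindmillData} (W : MData D)

lemma ncard_union_two {B C : Set (Fin 6)} (hd : Disjoint B C)
    (hB : B.ncard = 1) (hC : C.ncard = 1) : (B ∪ C).ncard = 2 := by
  rw [Set.ncard_union_eq hd (Set.toFinite _) (Set.toFinite _), hB, hC]

lemma disj_jj {k k' : Fin 3} (h : k ≠ k') {P Q : Fin 6 → Prop} :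
    Disjoint {s : Fin 6 | Wjj s = k ∧ P s} {s : Fin 6 | Wjj s = k' ∧ Q s} := by
  rw [Set.disjoint_left]
  rintro s ⟨h1, _⟩ ⟨h2, _⟩
  exact h (h1.symm.trans h2)

lemma countE_hh {i : Fin 3} (v w : D.HVert i) (h : (D.G i).Adj v.1 w.1) :
    ({s : Fin 6 | s(D.hv v, D.hv w) ∈ (NN W s).edgeSet}).ncard = 2 := by
  have hset : {s : Fin 6 | s(D.hv v, D.hv w) ∈ (NN W s).edgeSet}
      = {s : Fin 6 | W.m i s v.1 = w.1} := by
    ext s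
    rw [Set.mem_setOf_eq, Set.mem_setOf_eq, mem_NN, ff_hv]
    unfold fH
    constructor
    · intro hf
      split_ifs at hf with h1 h2 h3 h4
      · exact absurd hf.symm (hv_ne_av w _)
      · exact absurd hf.symm (hv_ne_bv w _)
      · exact absurd hf.symm (hv_ne_av w _)
      · exact absurd hf.symm (hv_ne_bv w _)
      · exact hv_val_inj hf
    · intro hm
      rw [dif_neg (by rw [hm]; exact w.2.1), dif_neg (by rw [hm]; exact w.2.2)]
      exact congrArg D.hv (Subtype.ext hm)
  rw [hset]
  exact W.cov i v.1 w.1 h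

lemma countE_cu (k : Fin 3) :
    ({s : Fin 6 | s(D.cv k, D.uv) ∈ (NN W s).edgeSet}).ncard = 2 := by
  have hset : {s : Fin 6 | s(D.cv k, D.uv) ∈ (NN W s).edgeSet} = {s : Fin 6 | Wjj s = k} := by
    ext s
    rw [Set.mem_setOf_eq, Set.mem_setOf_eq, mem_NN, ff_cv]
    unfold fC
    constructor
    · intro hf
      rcases fin3_cases (Wjj s) k with hj | hj | hj
      · exact hj
      · rw [if_neg (by rw [hj]; exact fin3_add_ne k),
            if_neg (by rw [hj]; exact fin3_add_ne_sub k)] at hf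
        split_ifs at hf
        · exact absurd hf (bv_ne_uv k)
        · exact absurd hf (av_ne_uv k)
      · rw [if_neg (by rw [hj]; exact fin3_sub_ne k), if_pos hj] at hf
        split_ifs at hf
        · exact absurd hf (bv_ne_uv k)
        · exact absurd hf (av_ne_uv k)
    · intro hj
      rw [if_pos hj]
  rw [hset]
  exact count_j k

lemma countE_ax0 (k : Fin 3) :
    ({s : Fin 6 | s(D.av k, D.x0v (k+1)) ∈ (NN W s).edgeSet}).ncard = 2 := by
  have hset : {s : Fin 6 | s(D.av k, D.x0v (k+1)) ∈ (NN W s).edgeSet}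
      = {s : Fin 6 | Wjj s = k ∧ Wrr s = 0} ∪
        {s : Fin 6 | Wjj s = k - 1 ∧ W.m (k+1) s (D.x (k+1)) = D.x0 (k+1)} := by
    ext s
    rw [Set.mem_setOf_eq, Set.mem_union, Set.mem_setOf_eq, Set.mem_setOf_eq, mem_NN, ff_av]
    unfold fA
    constructor
    · intro hf
      rcases fin3_cases (Wjj s) k with hj | hj | hj
      · rw [if_pos hj] at hf
        by_cases hr : Wrr s = 0
        · exact Or.inl ⟨hj, hr⟩
        · rw [if_neg hr] at hf
          exact absurd hf (by unfold y0v x0v; exact hv_ne_hv_of_ne _ _ (fin3_sub_ne_add k))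
      · rw [if_neg (by rw [hj]; exact fin3_add_ne k),
            if_neg (by rw [hj]; exact fin3_add_ne_sub k)] at hf
        split_ifs at hf
        · exact absurd hf (by unfold y0v x0v; exact hv_ne_hv_of_ne _ _ (fin3_sub_ne_add k))
        · exact absurd hf.symm (hv_ne_cv _ _)
      · rw [if_neg (by rw [hj]; exact fin3_sub_ne k), if_pos hj] at hf
        by_cases hm : W.m (k+1) s (D.x (k+1)) = D.x0 (k+1)
        · exact Or.inr ⟨hj, hm⟩
        · rw [if_neg hm] at hf
          exact absurd hf.symm (hv_ne_cv _ _)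
    · rintro (⟨hj, hr⟩ | ⟨hj, hm⟩)
      · rw [if_pos hj, if_pos hr]
      · rw [if_neg (by rw [hj]; exact fin3_sub_ne k), if_pos hj, if_pos hm]
  rw [hset]
  refine ncard_union_two (disj_jj (fin3_ne_sub k)) (count_jr k 0) ?_
  have hc := count_open_x0 W (k+1)
  rw [fin3_add_add] at hc
  exact hc

lemma countE_ay0 (k : Fin 3) :
    ({s : Fin 6 | s(D.av k, D.y0v (k-1)) ∈ (NN W s).edgeSet}).ncard = 2 := by
  have hset : {s : Fin 6 | s(D.av k, D.y0v (k-1)) ∈ (NN W s).edgeSet}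
      = {s : Fin 6 | Wjj s = k ∧ Wrr s = 1} ∪
        {s : Fin 6 | Wjj s = k + 1 ∧ W.m (k-1) s (D.y (k-1)) = D.y0 (k-1)} := by
    ext s
    rw [Set.mem_setOf_eq, Set.mem_union, Set.mem_setOf_eq, Set.mem_setOf_eq, mem_NN, ff_av]
    unfold fA
    constructor
    · intro hf
      rcases fin3_cases (Wjj s) k with hj | hj | hj
      · rw [if_pos hj] at hf
        by_cases hr : Wrr s = 0
        · rw [if_pos hr] at hf
          exact absurd hf (by unfold y0v x0v; exact hv_ne_hv_of_ne _ _ (fin3_add_ne_sub k))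
        · exact Or.inl ⟨hj, by omega⟩
      · rw [if_neg (by rw [hj]; exact fin3_add_ne k),
            if_neg (by rw [hj]; exact fin3_add_ne_sub k)] at hf
        by_cases hm : W.m (k-1) s (D.y (k-1)) = D.y0 (k-1)
        · exact Or.inr ⟨hj, hm⟩
        · rw [if_neg hm] at hf
          exact absurd hf.symm (hv_ne_cv _ _)
      · rw [if_neg (by rw [hj]; exact fin3_sub_ne k), if_pos hj] at hf
        split_ifs at hf
        · exact absurd hf (by unfold y0v x0v; exact hv_ne_hv_of_ne _ _ (fin3_add_ne_sub k))
        · exact absurd hf.symm (hv_ne_cv _ _)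
    · rintro (⟨hj, hr⟩ | ⟨hj, hm⟩)
      · rw [if_pos hj, if_neg (by rw [hr]; exact one_ne_zero)]
      · rw [if_neg (by rw [hj]; exact fin3_add_ne k),
            if_neg (by rw [hj]; exact fin3_add_ne_sub k), if_pos hm]
  rw [hset]
  refine ncard_union_two (disj_jj (fin3_ne_add k)) (count_jr k 1) ?_
  have hc := count_open_y0 W (k-1)
  rw [fin3_sub_sub] at hc
  exact hc

lemma countE_bx1 (k : Fin 3) :
    ({s : Fin 6 | s(D.bv k, D.x1v (k+1)) ∈ (NN W s).edgeSet}).ncard = 2 := by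
  have hset : {s : Fin 6 | s(D.bv k, D.x1v (k+1)) ∈ (NN W s).edgeSet}
      = {s : Fin 6 | Wjj s = k ∧ Wrr s = 1} ∪
        {s : Fin 6 | Wjj s = k - 1 ∧ W.m (k+1) s (D.x (k+1)) = D.x1 (k+1)} := by
    ext s
    rw [Set.mem_setOf_eq, Set.mem_union, Set.mem_setOf_eq, Set.mem_setOf_eq, mem_NN, ff_bv]
    unfold fB
    constructor
    · intro hf
      rcases fin3_cases (Wjj s) k with hj | hj | hj
      · rw [if_pos hj] at hf
        by_cases hr : Wrr s = 0
        · rw [if_pos hr] at hf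
          exact absurd hf (by unfold y1v x1v; exact hv_ne_hv_of_ne _ _ (fin3_sub_ne_add k))
        · exact Or.inl ⟨hj, by omega⟩
      · rw [if_neg (by rw [hj]; exact fin3_add_ne k),
            if_neg (by rw [hj]; exact fin3_add_ne_sub k)] at hf
        split_ifs at hf
        · exact absurd hf (by unfold y1v x1v; exact hv_ne_hv_of_ne _ _ (fin3_sub_ne_add k))
        · exact absurd hf.symm (hv_ne_cv _ _)
      · rw [if_neg (by rw [hj]; exact fin3_sub_ne k), if_pos hj] at hf
        by_cases hm : W.m (k+1) s (D.x (k+1)) = D.x1 (k+1)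
        · exact Or.inr ⟨hj, hm⟩
        · rw [if_neg hm] at hf
          exact absurd hf.symm (hv_ne_cv _ _)
    · rintro (⟨hj, hr⟩ | ⟨hj, hm⟩)
      · rw [if_pos hj, if_neg (by rw [hr]; exact one_ne_zero)]
      · rw [if_neg (by rw [hj]; exact fin3_sub_ne k), if_pos hj, if_pos hm]
  rw [hset]
  refine ncard_union_two (disj_jj (fin3_ne_sub k)) (count_jr k 1) ?_
  have hc := count_open_x1 W (k+1)
  rw [fin3_add_add] at hc
  exact hc

lemma countE_by1 (k : Fin 3) :
    ({s : Fin 6 | s(D.bv k, D.y1v (k-1)) ∈ (NN W s).edgeSet}).ncard = 2 := by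
  have hset : {s : Fin 6 | s(D.bv k, D.y1v (k-1)) ∈ (NN W s).edgeSet}
      = {s : Fin 6 | Wjj s = k ∧ Wrr s = 0} ∪
        {s : Fin 6 | Wjj s = k + 1 ∧ W.m (k-1) s (D.y (k-1)) = D.y1 (k-1)} := by
    ext s
    rw [Set.mem_setOf_eq, Set.mem_union, Set.mem_setOf_eq, Set.mem_setOf_eq, mem_NN, ff_bv]
    unfold fB
    constructor
    · intro hf
      rcases fin3_cases (Wjj s) k with hj | hj | hj
      · rw [if_pos hj] at hf
        by_cases hr : Wrr s = 0
        · exact Or.inl ⟨hj, hr⟩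
        · rw [if_neg hr] at hf
          exact absurd hf (by unfold y1v x1v; exact hv_ne_hv_of_ne _ _ (fin3_add_ne_sub k))
      · rw [if_neg (by rw [hj]; exact fin3_add_ne k),
            if_neg (by rw [hj]; exact fin3_add_ne_sub k)] at hf
        by_cases hm : W.m (k-1) s (D.y (k-1)) = D.y1 (k-1)
        · exact Or.inr ⟨hj, hm⟩
        · rw [if_neg hm] at hf
          exact absurd hf.symm (hv_ne_cv _ _)
      · rw [if_neg (by rw [hj]; exact fin3_sub_ne k), if_pos hj] at hf
        split_ifs at hf
        · exact absurd hf (by unfold y1v x1v; exact hv_ne_hv_of_ne _ _ (fin3_add_ne_sub k))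
        · exact absurd hf.symm (hv_ne_cv _ _)
    · rintro (⟨hj, hr⟩ | ⟨hj, hm⟩)
      · rw [if_pos hj, if_pos hr]
      · rw [if_neg (by rw [hj]; exact fin3_add_ne k),
            if_neg (by rw [hj]; exact fin3_add_ne_sub k), if_pos hm]
  rw [hset]
  refine ncard_union_two (disj_jj (fin3_ne_add k)) (count_jr k 0) ?_
  have hc := count_open_y1 W (k-1)
  rw [fin3_sub_sub] at hc
  exact hc

lemma countE_ca (k : Fin 3) :
    ({s : Fin 6 | s(D.cv k, D.av k) ∈ (NN W s).edgeSet}).ncard = 2 := by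
  have hset : {s : Fin 6 | s(D.cv k, D.av k) ∈ (NN W s).edgeSet}
      = {s : Fin 6 | Wjj s = k - 1 ∧ W.m (k+1) s (D.x (k+1)) = D.x1 (k+1)} ∪
        {s : Fin 6 | Wjj s = k + 1 ∧ W.m (k-1) s (D.y (k-1)) = D.y1 (k-1)} := by
    ext s
    rw [Set.mem_setOf_eq, Set.mem_union, Set.mem_setOf_eq, Set.mem_setOf_eq, mem_NN, ff_cv]
    unfold fC
    constructor
    · intro hf
      rcases fin3_cases (Wjj s) k with hj | hj | hj
      · rw [if_pos hj] at hf
        exact absurd hf.symm (av_ne_uv k)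
      · rw [if_neg (by rw [hj]; exact fin3_add_ne k),
            if_neg (by rw [hj]; exact fin3_add_ne_sub k)] at hf
        by_cases hm : W.m (k-1) s (D.y (k-1)) = D.y0 (k-1)
        · rw [if_pos hm] at hf
          exact absurd hf.symm (av_ne_bv k k)
        · exact Or.inr ⟨hj, (slot_y_cases W hj).resolve_left hm⟩
      · rw [if_neg (by rw [hj]; exact fin3_sub_ne k), if_pos hj] at hf
        by_cases hm : W.m (k+1) s (D.x (k+1)) = D.x0 (k+1)
        · rw [if_pos hm] at hf
          exact absurd hf.symm (av_ne_bv k k)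
        · exact Or.inl ⟨hj, (slot_x_cases W hj).resolve_left hm⟩
    · rintro (⟨hj, hm⟩ | ⟨hj, hm⟩)
      · rw [if_neg (by rw [hj]; exact fin3_sub_ne k), if_pos hj,
            if_neg (by rw [hm]; exact fun hh => D.x0_ne_x1 (k+1) hh.symm)]
      · rw [if_neg (by rw [hj]; exact fin3_add_ne k),
            if_neg (by rw [hj]; exact fin3_add_ne_sub k),
            if_neg (by rw [hm]; exact fun hh => D.y0_ne_y1 (k-1) hh.symm)]
  rw [hset]
  refine ncard_union_two (disj_jj (fin3_sub_ne_add k)) ?_ ?_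
  · have hc := count_open_x1 W (k+1)
    rw [fin3_add_add] at hc
    exact hc
  · have hc := count_open_y1 W (k-1)
    rw [fin3_sub_sub] at hc
    exact hc

lemma countE_cb (k : Fin 3) :
    ({s : Fin 6 | s(D.cv k, D.bv k) ∈ (NN W s).edgeSet}).ncard = 2 := by
  have hset : {s : Fin 6 | s(D.cv k, D.bv k) ∈ (NN W s).edgeSet}
      = {s : Fin 6 | Wjj s = k - 1 ∧ W.m (k+1) s (D.x (k+1)) = D.x0 (k+1)} ∪
        {s : Fin 6 | Wjj s = k + 1 ∧ W.m (k-1) s (D.y (k-1)) = D.y0 (k-1)} := by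
    ext s
    rw [Set.mem_setOf_eq, Set.mem_union, Set.mem_setOf_eq, Set.mem_setOf_eq, mem_NN, ff_cv]
    unfold fC
    constructor
    · intro hf
      rcases fin3_cases (Wjj s) k with hj | hj | hj
      · rw [if_pos hj] at hf
        exact absurd hf.symm (bv_ne_uv k)
      · rw [if_neg (by rw [hj]; exact fin3_add_ne k),
            if_neg (by rw [hj]; exact fin3_add_ne_sub k)] at hf
        by_cases hm : W.m (k-1) s (D.y (k-1)) = D.y0 (k-1)
        · exact Or.inr ⟨hj, hm⟩
        · rw [if_neg hm] at hf
          exact absurd hf (av_ne_bv k k)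
      · rw [if_neg (by rw [hj]; exact fin3_sub_ne k), if_pos hj] at hf
        by_cases hm : W.m (k+1) s (D.x (k+1)) = D.x0 (k+1)
        · exact Or.inl ⟨hj, hm⟩
        · rw [if_neg hm] at hf
          exact absurd hf (av_ne_bv k k)
    · rintro (⟨hj, hm⟩ | ⟨hj, hm⟩)
      · rw [if_neg (by rw [hj]; exact fin3_sub_ne k), if_pos hj, if_pos hm]
      · rw [if_neg (by rw [hj]; exact fin3_add_ne k),
            if_neg (by rw [hj]; exact fin3_add_ne_sub k), if_pos hm]
  rw [hset]
  refine ncard_union_two (disj_jj (fin3_sub_ne_add k)) ?_ ?_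
  · have hc := count_open_x0 W (k+1)
    rw [fin3_add_add] at hc
    exact hc
  · have hc := count_open_y0 W (k-1)
    rw [fin3_sub_sub] at hc
    exact hc

end WindmillData

namespace WindmillData
variable {D : WindmillData}

lemma count_rel (W : MData D) {p q : D.Vert} (h : D.rel p q) :
    ({s : Fin 6 | s(p, q) ∈ (NN W s).edgeSet}).ncard = 2 := by
  rcases h with ⟨i, v, w, hadj, rfl, rfl⟩ | ⟨i, rfl, rfl⟩ | ⟨i, rfl, rfl⟩ |
    ⟨i, rfl, rfl⟩ | ⟨i, rfl, rfl⟩ | ⟨i, rfl, hq⟩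
  · exact countE_hh W v w hadj
  · exact countE_ax0 W i
  · exact countE_ay0 W i
  · exact countE_bx1 W i
  · exact countE_by1 W i
  · rcases hq with rfl | rfl | rfl
    · exact countE_ca W i
    · exact countE_cb W i
    · exact countE_cu W i

lemma mdata_bfcover (W : MData D) : HasBFCover D.graph := by
  refine ⟨NN W, NN_isPM W, ?_⟩
  intro e he
  induction e using Sym2.ind with
  | _ p q =>
    have hadj : D.graph.Adj p q := (SimpleGraph.mem_edgeSet _).1 he
    unfold graph at hadj
    rw [SimpleGraph.fromRel_adj] at hadj
    rcases hadj.2 with h | h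
    · exact count_rel W h
    · have hsw : s(p, q) = s(q, p) := Sym2.eq_swap
      rw [hsw]
      exact count_rel W h

end WindmillData

/-- system of distinct representatives for the four slot classes -/
lemma sdr_lemma {α : Type} (X0 X1 Y0 Y1 : Set α)
    (hX0 : X0.ncard = 2) (hX1 : X1.ncard = 2) (hY0 : Y0.ncard = 2) (hY1 : Y1.ncard = 2)
    (hdX : ∀ t, t ∈ X0 → t ∉ X1) (hdY : ∀ t, t ∈ Y0 → t ∉ Y1)
    (hU : X0 ∪ X1 = Y0 ∪ Y1) :
    ∃ t1 t2 t3 t4 : α, t1 ∈ X0 ∧ t2 ∈ X1 ∧ t3 ∈ Y1 ∧ t4 ∈ Y0 ∧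
      t1 ≠ t2 ∧ t1 ≠ t3 ∧ t1 ≠ t4 ∧ t2 ≠ t3 ∧ t2 ≠ t4 ∧ t3 ≠ t4 := by
  classical
  have hY1fin : Y1.Finite := Set.finite_of_ncard_ne_zero (by omega)
  have hY0fin : Y0.Finite := Set.finite_of_ncard_ne_zero (by omega)
  have hX0fin : X0.Finite := Set.finite_of_ncard_ne_zero (by omega)
  have hX1fin : X1.Finite := Set.finite_of_ncard_ne_zero (by omega)
  obtain ⟨y1a, hy1a⟩ := Set.nonempty_of_ncard_ne_zero (s := Y1) (by omega)
  -- find t3 ∈ Y1, t4 ∈ Y0 with exactly one of them in X0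
  have key : ∃ t3 t4, t3 ∈ Y1 ∧ t4 ∈ Y0 ∧ ((t3 ∈ X0 ∧ t4 ∉ X0) ∨ (t3 ∉ X0 ∧ t4 ∈ X0)) := by
    by_cases hy : y1a ∈ X0
    · -- find t4 ∈ Y0 \ X0
      have : ¬ Y0 ⊆ X0 := by
        intro hsub
        have hins : insert y1a Y0 ⊆ X0 := Set.insert_subset hy hsub
        have hni : y1a ∉ Y0 := fun hmem => hdY y1a hmem hy1a
        have h3 : (insert y1a Y0).ncard = 3 := by
          rw [Set.ncard_insert_of_notMem hni hY0fin, hY0]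
        have := Set.ncard_le_ncard hins hX0fin
        omega
      obtain ⟨t4, ht4, ht4n⟩ := Set.not_subset.1 this
      exact ⟨y1a, t4, hy1a, ht4, Or.inl ⟨hy, ht4n⟩⟩
    · -- find t4 ∈ Y0 ∩ X0
      by_cases hex : ∃ t4 ∈ Y0, t4 ∈ X0
      · obtain ⟨t4, ht4, ht4x⟩ := hex
        exact ⟨y1a, t4, hy1a, ht4, Or.inr ⟨hy, ht4x⟩⟩
      · exfalso
        push_neg at hex
        have hsub : insert y1a Y0 ⊆ X1 := by
          refine Set.insert_subset ?_ ?_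
          · have : y1a ∈ X0 ∪ X1 := by rw [hU]; exact Or.inr hy1a
            rcases this with h | h
            · exact absurd h hy
            · exact h
          · intro u hu
            have : u ∈ X0 ∪ X1 := by rw [hU]; exact Or.inl hu
            rcases this with h | h
            · exact absurd h (hex u hu)
            · exact h
        have hni : y1a ∉ Y0 := fun hmem => hdY y1a hmem hy1a
        have h3 : (insert y1a Y0).ncard = 3 := by
          rw [Set.ncard_insert_of_notMem hni hY0fin, hY0]
        have := Set.ncard_le_ncard hsub hX1fin
        omega
  obtain ⟨t3, t4, ht3, ht4, hxor⟩ := key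
  have ht34 : t3 ≠ t4 := fun h => hdY t4 ht4 (h ▸ ht3)
  -- pick t1 ∈ X0 \ {t3, t4}
  have hpick : ∀ (S : Set α), S.ncard = 2 → S.Finite → (t3 ∈ S → t4 ∉ S) →
      (t4 ∈ S → t3 ∉ S) → ∃ t ∈ S, t ≠ t3 ∧ t ≠ t4 := by
    intro S hS hSfin h34 h43
    by_contra hno
    push_neg at hno
    have hsub : S ⊆ {t3, t4} := by
      intro u hu
      by_cases h3 : u = t3
      · exact Or.inl h3
      · exact Or.inr (hno u hu h3)
    -- S has ≤ 1 element since it misses one of t3, t4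
    obtain ⟨a, b, hab, hSeq⟩ := Set.ncard_eq_two.1 hS
    have haS : a ∈ S := by rw [hSeq]; exact Set.mem_insert a {b}
    have hbS : b ∈ S := by rw [hSeq]; exact Set.mem_insert_of_mem a rfl
    have ha := hsub haS
    have hb := hsub hbS
    rcases ha with rfl | rfl <;> rcases hb with rfl | rfl
    · exact hab rfl
    · exact (h34 haS) hbS
    · exact (h43 haS) hbS
    · exact hab rfl
  have hX0cases : (t3 ∈ X0 → t4 ∉ X0) ∧ (t4 ∈ X0 → t3 ∉ X0) := by
    rcases hxor with ⟨h1, h2⟩ | ⟨h1, h2⟩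
    · exact ⟨fun _ => h2, fun h => absurd h h2⟩
    · exact ⟨fun h => absurd h h1, fun _ => h1⟩
  obtain ⟨t1, ht1, ht13, ht14⟩ := hpick X0 hX0 hX0fin hX0cases.1 hX0cases.2
  have hX1cases : (t3 ∈ X1 → t4 ∉ X1) ∧ (t4 ∈ X1 → t3 ∉ X1) := by
    rcases hxor with ⟨h1, h2⟩ | ⟨h1, h2⟩
    · exact ⟨fun h => absurd h (hdX t3 h1), fun _ => hdX t3 h1⟩
    · exact ⟨fun _ => hdX t4 h2, fun h => absurd h (hdX t4 h2)⟩
  obtain ⟨t2, ht2, ht23, ht24⟩ := hpick X1 hX1 hX1fin hX1cases.1 hX1cases.2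
  have ht12 : t1 ≠ t2 := fun h => (hdX t1 ht1) (h ▸ ht2)
  exact ⟨t1, t2, t3, t4, ht1, ht2, ht3, ht4, ht12, ht13, ht14, ht23, ht24, ht34⟩

def slotF (k : Fin 3) (r : Fin 2) : Fin 6 := ⟨2 * k.val + r.val, by omega⟩

lemma slotF_eq (s : Fin 6) : slotF (Wjj s) (Wrr s) = s := by
  apply Fin.ext
  simp only [slotF, Wjj, Wrr]
  omega

lemma ncard_preimage_bij {π : Fin 6 → Fin 6} (hb : Function.Bijective π) (S : Set (Fin 6)) :
    (π ⁻¹' S).ncard = S.ncard := by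
  have hE : π ⁻¹' S = ⇑(Equiv.ofBijective π hb).symm '' S := by
    rw [Equiv.image_symm_eq_preimage]
    rfl
  rw [hE, Set.ncard_image_of_injective _ (Equiv.ofBijective π hb).symm.injective]

lemma set_eq_three {α : Type} {s : Set α} {a b c : α} (hs : s.ncard = 3)
    (ha : a ∈ s) (hb : b ∈ s) (hc : c ∈ s) (hab : a ≠ b) (hac : a ≠ c) (hbc : b ≠ c) :
    s = {a, b, c} := by
  have hfin : s.Finite := Set.finite_of_ncard_ne_zero (by omega)
  have h3 : ({a, b, c} : Set α).ncard = 3 := Set.ncard_eq_three.2 ⟨a, b, c, hab, hac, hbc, rfl⟩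
  have hsub : ({a, b, c} : Set α) ⊆ s := by
    intro u hu
    rcases hu with rfl | rfl | rfl
    · exact ha
    · exact hb
    · exact hc
  exact (Set.eq_of_subset_of_ncard_le hsub (by omega) hfin).symm

namespace WindmillData
variable {D : WindmillData}

lemma exists_pi (i : Fin 3) (p : Fin 6 → D.V i → D.V i)
    (hinv : ∀ t v, p t (p t v) = v)
    (hclx : ∀ t, p t (D.x i) = D.y i ∨ p t (D.x i) = D.x0 i ∨ p t (D.x i) = D.x1 i)
    (hcly : ∀ t, p t (D.y i) = D.x i ∨ p t (D.y i) = D.y0 i ∨ p t (D.y i) = D.y1 i)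
    (hT : ({t : Fin 6 | p t (D.x i) = D.y i}).ncard = 2)
    (hX0 : ({t : Fin 6 | p t (D.x i) = D.x0 i}).ncard = 2)
    (hX1 : ({t : Fin 6 | p t (D.x i) = D.x1 i}).ncard = 2)
    (hY0 : ({t : Fin 6 | p t (D.y i) = D.y0 i}).ncard = 2)
    (hY1 : ({t : Fin 6 | p t (D.y i) = D.y1 i}).ncard = 2) :
    ∃ π : Fin 6 → Fin 6, Function.Bijective π ∧
      (∀ s, Wjj s = i → p (π s) (D.x i) = D.y i) ∧
      (∀ s, Wjj s = i - 1 → p (π s) (D.x i) = (if Wrr s = 0 then D.x0 i else D.x1 i)) ∧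
      (∀ s, Wjj s = i + 1 → p (π s) (D.y i) = (if Wrr s = 0 then D.y1 i else D.y0 i)) := by
  classical
  obtain ⟨u1, u2, hu12, hTeq⟩ := Set.ncard_eq_two.1 hT
  have hu1 : p u1 (D.x i) = D.y i := by
    have : u1 ∈ {t : Fin 6 | p t (D.x i) = D.y i} := by rw [hTeq]; exact Set.mem_insert _ _
    exact this
  have hu2 : p u2 (D.x i) = D.y i := by
    have : u2 ∈ {t : Fin 6 | p t (D.x i) = D.y i} := by
      rw [hTeq]; exact Set.mem_insert_of_mem _ rfl
    exact this
  have hU : {t : Fin 6 | p t (D.x i) = D.x0 i} ∪ {t : Fin 6 | p t (D.x i) = D.x1 i}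
      = {t : Fin 6 | p t (D.y i) = D.y0 i} ∪ {t : Fin 6 | p t (D.y i) = D.y1 i} := by
    ext t
    simp only [Set.mem_union, Set.mem_setOf_eq]
    constructor
    · intro h
      have hxy : ¬ p t (D.x i) = D.y i := by
        rcases h with h | h
        · rw [h]; exact D.x0_ne_y i
        · rw [h]; exact D.x1_ne_y i
      rcases hcly t with hy | hy | hy
      · exfalso
        apply hxy
        have h0 := hinv t (D.y i); rw [hy] at h0; exact h0
      · exact Or.inl hy
      · exact Or.inr hy
    · intro h
      have hyx : ¬ p t (D.x i) = D.y i := by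
        intro hx
        have h0 := hinv t (D.x i); rw [hx] at h0
        rcases h with h | h
        · rw [h] at h0; exact D.y0_ne_x i h0
        · rw [h] at h0; exact D.y1_ne_x i h0
      rcases hclx t with hx | hx | hx
      · exact absurd hx hyx
      · exact Or.inl hx
      · exact Or.inr hx
  obtain ⟨t1, t2, t3, t4, ht1, ht2, ht3, ht4, h12, h13, h14, h23, h24, h34⟩ :=
    sdr_lemma {t : Fin 6 | p t (D.x i) = D.x0 i} {t : Fin 6 | p t (D.x i) = D.x1 i}
      {t : Fin 6 | p t (D.y i) = D.y0 i} {t : Fin 6 | p t (D.y i) = D.y1 i}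
      hX0 hX1 hY0 hY1
      (fun t h h' => D.x0_ne_x1 i (h.symm.trans h'))
      (fun t h h' => D.y0_ne_y1 i (h.symm.trans h'))
      hU
  -- simp normal forms of memberships
  rw [Set.mem_setOf_eq] at ht1 ht2 ht3 ht4
  -- distinctness of u's from t's
  have hut : ∀ t : Fin 6, p t (D.x i) = D.y i →
      t ≠ t1 ∧ t ≠ t2 ∧ t ≠ t3 ∧ t ≠ t4 := by
    intro t ht
    refine ⟨?_, ?_, ?_, ?_⟩
    · rintro rfl; exact D.x0_ne_y i (ht1.symm.trans ht)
    · rintro rfl; exact D.x1_ne_y i (ht2.symm.trans ht)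
    · rintro rfl
      have h0 := hinv t (D.x i); rw [ht] at h0
      rw [ht3] at h0; exact D.y1_ne_x i h0
    · rintro rfl
      have h0 := hinv t (D.x i); rw [ht] at h0
      rw [ht4] at h0; exact D.y0_ne_x i h0
  obtain ⟨hu1t1, hu1t2, hu1t3, hu1t4⟩ := hut u1 hu1
  obtain ⟨hu2t1, hu2t2, hu2t3, hu2t4⟩ := hut u2 hu2
  refine ⟨fun s => if Wjj s = i then (if Wrr s = 0 then u1 else u2)
    else if Wjj s = i - 1 then (if Wrr s = 0 then t1 else t2)
    else (if Wrr s = 0 then t3 else t4), ?_, ?_, ?_, ?_⟩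
  · -- bijective
    rw [← Finite.injective_iff_bijective]
    apply Function.LeftInverse.injective (g := fun t =>
      if t = u1 then slotF i 0 else if t = u2 then slotF i 1
      else if t = t1 then slotF (i-1) 0 else if t = t2 then slotF (i-1) 1
      else if t = t3 then slotF (i+1) 0 else slotF (i+1) 1)
    intro s
    dsimp only
    rcases fin3_cases (Wjj s) i with hj | hj | hj
    all_goals by_cases hr : Wrr s = 0
    · rw [if_pos hj, if_pos hr, if_pos rfl, ← hj, ← hr, slotF_eq]
    · rw [if_pos hj, if_neg hr, if_neg hu12.symm, if_pos rfl]
      have hr1 : Wrr s = 1 := by omega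
      rw [← hj, ← hr1, slotF_eq]
    · -- Wjj s = i + 1 : third branch
      rw [if_neg (show ¬ Wjj s = i by rw [hj]; exact fin3_add_ne i),
        if_neg (show ¬ Wjj s = i - 1 by rw [hj]; exact fin3_add_ne_sub i),
        if_pos hr, if_neg hu1t3.symm, if_neg hu2t3.symm, if_neg h13.symm, if_neg h23.symm,
        if_pos rfl, ← hj, ← hr, slotF_eq]
    · rw [if_neg (show ¬ Wjj s = i by rw [hj]; exact fin3_add_ne i),
        if_neg (show ¬ Wjj s = i - 1 by rw [hj]; exact fin3_add_ne_sub i),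
        if_neg hr, if_neg hu1t4.symm, if_neg hu2t4.symm, if_neg h14.symm, if_neg h24.symm,
        if_neg h34.symm]
      have hr1 : Wrr s = 1 := by omega
      rw [← hj, ← hr1, slotF_eq]
    · -- Wjj s = i - 1
      rw [if_neg (show ¬ Wjj s = i by rw [hj]; exact fin3_sub_ne i), if_pos hj, if_pos hr,
        if_neg hu1t1.symm, if_neg hu2t1.symm, if_pos rfl, ← hj, ← hr, slotF_eq]
    · rw [if_neg (show ¬ Wjj s = i by rw [hj]; exact fin3_sub_ne i), if_pos hj, if_neg hr,
        if_neg hu1t2.symm, if_neg hu2t2.symm, if_neg h12.symm, if_pos rfl]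
      have hr1 : Wrr s = 1 := by omega
      rw [← hj, ← hr1, slotF_eq]
  · intro s hj
    dsimp only
    rw [if_pos hj]
    by_cases hr : Wrr s = 0
    · rw [if_pos hr]; exact hu1
    · rw [if_neg hr]; exact hu2
  · intro s hj
    dsimp only
    rw [if_neg (show ¬ Wjj s = i by rw [hj]; exact fin3_sub_ne i), if_pos hj]
    by_cases hr : Wrr s = 0
    · rw [if_pos hr, if_pos hr]; exact ht1
    · rw [if_neg hr, if_neg hr]; exact ht2
  · intro s hj
    dsimp only
    rw [if_neg (show ¬ Wjj s = i by rw [hj]; exact fin3_add_ne i),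
      if_neg (show ¬ Wjj s = i - 1 by rw [hj]; exact fin3_add_ne_sub i)]
    by_cases hr : Wrr s = 0
    · rw [if_pos hr, if_pos hr]; exact ht3
    · rw [if_neg hr, if_neg hr]; exact ht4

end WindmillData

/-- If `G 0, G 1, G 2` are cubic bridgeless graphs each
admitting a Berge–Fulkerson cover, then any graph obtained from them by the
windmill construction admits a Berge–Fulkerson cover. -/
theorem windmill_bfCover (D : WindmillData) (hfin : ∀ i, Finite (D.V i))
    (hc : ∀ i, IsCubic (D.G i)) (hb : ∀ i, IsBridgeless (D.G i))
    (hbf : ∀ i, HasBFCover (D.G i)) :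
    HasBFCover D.graph := by
  classical
  choose M hM using hbf
  have hPM : ∀ i t, (M i t).IsPerfectMatching := fun i t => (hM i).1 t
  have hcov := fun i => (hM i).2
  have hex : ∀ i t (v : D.V i), ∃! w, (M i t).Adj v w :=
    fun i t => SimpleGraph.Subgraph.isPerfectMatching_iff.mp (hPM i t)
  let p : ∀ i : Fin 3, Fin 6 → D.V i → D.V i := fun i t v => (hex i t v).choose
  have hpadj : ∀ i t v, (M i t).Adj v (p i t v) := fun i t v => (hex i t v).choose_spec.1
  have hpuniq : ∀ i t v w, (M i t).Adj v w → p i t v = w :=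
    fun i t v w h => ((hex i t v).choose_spec.2 w h).symm
  have hpinv : ∀ i t v, p i t (p i t v) = v := fun i t v => hpuniq i t _ v (hpadj i t v).symm
  have hpG : ∀ i t v, (D.G i).Adj v (p i t v) := fun i t v => (hpadj i t v).adj_sub
  have hpcount : ∀ i (v w : D.V i), (D.G i).Adj v w →
      ({t : Fin 6 | p i t v = w}).ncard = 2 := by
    intro i v w h
    have hseteq : {t : Fin 6 | p i t v = w} = {t : Fin 6 | s(v, w) ∈ (M i t).edgeSet} := by
      ext t
      simp only [Set.mem_setOf_eq, SimpleGraph.Subgraph.mem_edgeSet]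
      exact ⟨fun hh => hh ▸ hpadj i t v, fun hh => hpuniq i t v w hh⟩
    rw [hseteq]
    exact hcov i (s(v, w)) ((D.G i).mem_edgeSet.2 h)
  have hclx : ∀ i t, p i t (D.x i) = D.y i ∨ p i t (D.x i) = D.x0 i ∨
      p i t (D.x i) = D.x1 i := by
    intro i t
    have hmem : p i t (D.x i) ∈ (D.G i).neighborSet (D.x i) :=
      (D.G i).mem_neighborSet _ _ |>.2 (hpG i t (D.x i))
    have hns : (D.G i).neighborSet (D.x i) = {D.y i, D.x0 i, D.x1 i} :=
      set_eq_three (hc i (D.x i))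
        ((D.G i).mem_neighborSet _ _ |>.2 (D.adj_xy i))
        ((D.G i).mem_neighborSet _ _ |>.2 (D.adj_xx0 i))
        ((D.G i).mem_neighborSet _ _ |>.2 (D.adj_xx1 i))
        (D.x0_ne_y i).symm (D.x1_ne_y i).symm (D.x0_ne_x1 i)
    rw [hns] at hmem
    exact hmem
  have hcly : ∀ i t, p i t (D.y i) = D.x i ∨ p i t (D.y i) = D.y0 i ∨
      p i t (D.y i) = D.y1 i := by
    intro i t
    have hmem : p i t (D.y i) ∈ (D.G i).neighborSet (D.y i) :=
      (D.G i).mem_neighborSet _ _ |>.2 (hpG i t (D.y i))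
    have hns : (D.G i).neighborSet (D.y i) = {D.x i, D.y0 i, D.y1 i} :=
      set_eq_three (hc i (D.y i))
        ((D.G i).mem_neighborSet _ _ |>.2 (D.adj_xy i).symm)
        ((D.G i).mem_neighborSet _ _ |>.2 (D.adj_yy0 i))
        ((D.G i).mem_neighborSet _ _ |>.2 (D.adj_yy1 i))
        (D.y0_ne_x i).symm (D.y1_ne_x i).symm (D.y0_ne_y1 i)
    rw [hns] at hmem
    exact hmem
  have hπex : ∀ i, ∃ π : Fin 6 → Fin 6, Function.Bijective π ∧
      (∀ s, Wjj s = i → p i (π s) (D.x i) = D.y i) ∧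
      (∀ s, Wjj s = i - 1 → p i (π s) (D.x i) = (if Wrr s = 0 then D.x0 i else D.x1 i)) ∧
      (∀ s, Wjj s = i + 1 → p i (π s) (D.y i) = (if Wrr s = 0 then D.y1 i else D.y0 i)) :=
    fun i => WindmillData.exists_pi i (p i) (hpinv i) (hclx i) (hcly i)
      (hpcount i (D.x i) (D.y i) (D.adj_xy i))
      (hpcount i (D.x i) (D.x0 i) (D.adj_xx0 i))
      (hpcount i (D.x i) (D.x1 i) (D.adj_xx1 i))
      (hpcount i (D.y i) (D.y0 i) (D.adj_yy0 i))
      (hpcount i (D.y i) (D.y1 i) (D.adj_yy1 i))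
  choose π hπ using hπex
  refine WindmillData.mdata_bfcover ⟨fun i s => p i (π i s),
    fun i s v => hpinv i _ v,
    fun i s v => hpG i _ v,
    fun i s hj => (hπ i).2.1 s hj,
    fun i s hj => (hπ i).2.2.1 s hj,
    fun i s hj => (hπ i).2.2.2 s hj,
    fun i s => hclx i _,
    fun i s => hcly i _,
    ?_⟩
  intro i v w h
  have hpre : {s : Fin 6 | p i (π i s) v = w} = π i ⁻¹' {t : Fin 6 | p i t v = w} := rfl
  rw [hpre, ncard_preimage_bij (hπ i).1, hpcount i v w h]
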